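/- Let S and A be finite nonempty types. Let π, π' : S → A → ℝ be policies, i.e., for every s ∈ S, π(s,·) and π'(s,·) are nonnegative and sum to 1 over A. Let P : S → A → S → ℝ be a transition function, i.e., for every s,a, P(s,a,·) is nonnegative and sums to 1 over S. Define K(s,s') = Σ_{a∈A} π(s,a)·P(s,a,s') and K'(s,s') = Σ_{a∈A} π'(s,a)·P(s,a,s'), and let K^c, K'^c denote their c-fold compositions. Suppose ε ∈ [0,1] and (1/2)·Σ_{a∈A} |π'(s,a) − π(s,a)| ≤ ε for every s ∈ S. Then for every c ≥ 1 and every s ∈ S, Σ_{s'∈S} |K'^c(s,s') − K^c(s,s')| ≤ 2εc. -/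

import Mathlib

open Finset

/-- `kpow K c` is the `c`-fold composition `K^c` of the kernel `K` (for `c ≥ 1`):
`K^1 = K` and `K^{n+1}(s, s'') = ∑ s', K(s, s') * K^n(s', s'')`. -/
noncomputable def kpow {S : Type*} [Fintype S] (K : S → S → ℝ) : ℕ → S → S → ℝ
  | 0 => fun _ _ => 0
  | 1 => K
  | n + 2 => fun s s'' => ∑ s', K s s' * kpow K (n + 1) s' s''

lemma kpow_succ {S : Type*} [Fintype S] (K : S → S → ℝ) (c : ℕ) (hc : 1 ≤ c)
    (s s'' : S) : kpow K (c + 1) s s'' = ∑ s', K s s' * kpow K c s' s'' := by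
  obtain ⟨n, rfl⟩ : ∃ n, c = n + 1 := ⟨c - 1, by omega⟩
  rfl

lemma kpow_nonneg {S : Type*} [Fintype S] {K : S → S → ℝ} (h : ∀ s s', 0 ≤ K s s') :
    ∀ c s s', 0 ≤ kpow K c s s'
  | 0, _, _ => le_refl 0
  | 1, s, s' => h s s'
  | (n+2), s, s' =>
    Finset.sum_nonneg fun t _ => mul_nonneg (h s t) (kpow_nonneg h (n+1) t s')

lemma kpow_sum {S : Type*} [Fintype S] {K : S → S → ℝ}
    (h : ∀ s, ∑ s', K s s' = 1) :
    ∀ c, 1 ≤ c → ∀ s, ∑ s', kpow K c s s' = 1 := by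
  intro c
  induction c with
  | zero => omega
  | succ n ih =>
    intro _ s
    rcases Nat.eq_zero_or_pos n with rfl | hn
    · exact h s
    · simp_rw [kpow_succ K n hn]
      rw [Finset.sum_comm]
      simp_rw [← Finset.mul_sum, ih hn, mul_one]
      exact h s

theorem abstracted_transition_tv_bound
    {S A : Type*} [Fintype S] [Nonempty S] [Fintype A] [Nonempty A]
    (π π' : S → A → ℝ)
    (hπ_nonneg : ∀ s a, 0 ≤ π s a) (hπ_sum : ∀ s, ∑ a, π s a = 1)
    (hπ'_nonneg : ∀ s a, 0 ≤ π' s a) (hπ'_sum : ∀ s, ∑ a, π' s a = 1)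
    (P : S → A → S → ℝ)
    (hP_nonneg : ∀ s a s', 0 ≤ P s a s') (hP_sum : ∀ s a, ∑ s', P s a s' = 1)
    (K K' : S → S → ℝ)
    (hK : ∀ s s', K s s' = ∑ a, π s a * P s a s')
    (hK' : ∀ s s', K' s s' = ∑ a, π' s a * P s a s')
    (ε : ℝ) (hε0 : 0 ≤ ε) (hε1 : ε ≤ 1)
    (hclose : ∀ s, (1 / 2) * ∑ a, |π' s a - π s a| ≤ ε) :
    ∀ c : ℕ, 1 ≤ c → ∀ s : S,
      ∑ s', |kpow K' c s s' - kpow K c s s'| ≤ 2 * ε * c := by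
  have hK_nonneg : ∀ s s', 0 ≤ K s s' := fun s s' => by
    rw [hK]; exact Finset.sum_nonneg fun a _ => mul_nonneg (hπ_nonneg s a) (hP_nonneg s a s')
  have hK'_nonneg : ∀ s s', 0 ≤ K' s s' := fun s s' => by
    rw [hK']; exact Finset.sum_nonneg fun a _ => mul_nonneg (hπ'_nonneg s a) (hP_nonneg s a s')
  have hK_sum : ∀ s, ∑ s', K s s' = 1 := by
    intro s; simp_rw [hK]; rw [Finset.sum_comm]
    simp_rw [← Finset.mul_sum, hP_sum, mul_one]; exact hπ_sum s
  have hK'_sum : ∀ s, ∑ s', K' s s' = 1 := by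
    intro s; simp_rw [hK']; rw [Finset.sum_comm]
    simp_rw [← Finset.mul_sum, hP_sum, mul_one]; exact hπ'_sum s
  have hstep : ∀ s, ∑ s', |K' s s' - K s s'| ≤ 2 * ε := by
    intro s
    have h1 : ∀ s', |K' s s' - K s s'| ≤ ∑ a, |π' s a - π s a| * P s a s' := by
      intro s'
      rw [hK', hK, ← Finset.sum_sub_distrib]
      refine (Finset.abs_sum_le_sum_abs _ _).trans (le_of_eq ?_)
      refine Finset.sum_congr rfl fun a _ => ?_
      rw [← sub_mul, abs_mul, abs_of_nonneg (hP_nonneg s a s')]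
    calc ∑ s', |K' s s' - K s s'| ≤ ∑ s', ∑ a, |π' s a - π s a| * P s a s' :=
          Finset.sum_le_sum fun s' _ => h1 s'
      _ = ∑ a, |π' s a - π s a| := by
          rw [Finset.sum_comm]; simp_rw [← Finset.mul_sum, hP_sum, mul_one]
      _ ≤ 2 * ε := by have := hclose s; linarith
  intro c
  induction c with
  | zero => omega
  | succ n ih =>
    intro _ s
    rcases Nat.eq_zero_or_pos n with rfl | hn
    · simpa [kpow] using hstep s
    · have IH := ih hn
      have key : ∀ s'' : S, |kpow K' (n+1) s s'' - kpow K (n+1) s s''| ≤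
          ∑ s', (|K' s s' - K s s'| * kpow K' n s' s''
                 + K s s' * |kpow K' n s' s'' - kpow K n s' s''|) := by
        intro s''
        rw [kpow_succ K' n hn, kpow_succ K n hn, ← Finset.sum_sub_distrib]
        refine (Finset.abs_sum_le_sum_abs _ _).trans (Finset.sum_le_sum fun s' _ => ?_)
        have : K' s s' * kpow K' n s' s'' - K s s' * kpow K n s' s''
            = (K' s s' - K s s') * kpow K' n s' s''
              + K s s' * (kpow K' n s' s'' - kpow K n s' s'') := by ring
        rw [this]
        refine (abs_add_le _ _).trans ?_
        rw [abs_mul, abs_mul, abs_of_nonneg (kpow_nonneg hK'_nonneg n s' s''),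
          abs_of_nonneg (hK_nonneg s s')]
      calc ∑ s'', |kpow K' (n+1) s s'' - kpow K (n+1) s s''|
          ≤ ∑ s'', ∑ s', (|K' s s' - K s s'| * kpow K' n s' s''
              + K s s' * |kpow K' n s' s'' - kpow K n s' s''|) :=
            Finset.sum_le_sum fun s'' _ => key s''
        _ = ∑ s', (|K' s s' - K s s'| * ∑ s'', kpow K' n s' s''
              + K s s' * ∑ s'', |kpow K' n s' s'' - kpow K n s' s''|) := by
            rw [Finset.sum_comm]
            simp_rw [Finset.sum_add_distrib, ← Finset.mul_sum]
        _ ≤ ∑ s', (|K' s s' - K s s'| * 1 + K s s' * (2 * ε * n)) := by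
            refine Finset.sum_le_sum fun s' _ => ?_
            rw [kpow_sum hK'_sum n hn s']
            exact add_le_add le_rfl
              (mul_le_mul_of_nonneg_left (IH s') (hK_nonneg s s'))
        _ = (∑ s', |K' s s' - K s s'|) + (2 * ε * n) := by
            rw [Finset.sum_add_distrib]
            simp_rw [mul_one, ← Finset.sum_mul, hK_sum s, one_mul]
        _ ≤ 2 * ε * (n + 1 : ℕ) := by
            push_cast
            have := hstep s
            linarith
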